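/- Let D be a real random variable with continuous strictly increasing cdf F and finite mean, and let C : ℝ → ℝ be a differentiable convex function with 0 ≤ C'(g) < γ₁ for all g, where γ₁ > 0 and γ₂ ≥ 0 with γ₁ + γ₂ > 0. If g* minimizes L(g) = C(g) + γ₁·E[(D−g)⁺] + γ₂·E[(g−D)⁺] over ℝ and g* is in the interior of the support of D, then F(g*) = (γ₁ − C'(g*))/(γ₁ + γ₂). -/

import Mathlib

open MeasureTheory Set Filter

private lemma nv_int_pos (μ : Measure ℝ) [IsProbabilityMeasure μ]
    (hmean : Integrable id μ) (g : ℝ) :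
    Integrable (fun x => max (x - g) 0) μ :=
  (hmean.sub (integrable_const g)).pos_part

private lemma nv_int_neg (μ : Measure ℝ) [IsProbabilityMeasure μ]
    (hmean : Integrable id μ) (g : ℝ) :
    Integrable (fun x => max (g - x) 0) μ :=
  ((integrable_const g).sub hmean).pos_part

private lemma nv_aux (μ : Measure ℝ) [IsProbabilityMeasure μ]
    {f : ℝ → ℝ} (hint : Integrable f μ) {s : Set ℝ} (hs : MeasurableSet s) (c : ℝ)
    (hpt : ∀ x, f x ≤ s.indicator (fun _ => c) x) :
    ∫ x, f x ∂μ ≤ (μ s).toReal * c := by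
  calc ∫ x, f x ∂μ ≤ ∫ x, s.indicator (fun _ => c) x ∂μ :=
        integral_mono hint ((integrable_const c).indicator hs) hpt
    _ = (μ s).toReal * c := by rw [integral_indicator_const c hs]; simp [smul_eq_mul]; exact Or.inl rfl

/-- first-order (newsvendor-type) optimality condition:
at an interior minimizer `g*`, `F g* = (γ₁ − C'(g*))/(γ₁ + γ₂)`. -/
theorem newsvendor_optimality
    (μ : Measure ℝ) [IsProbabilityMeasure μ] (hmean : Integrable id μ)
    (F : ℝ → ℝ) (hF : ∀ x, F x = (μ (Iic x)).toReal)
    (hFcont : Continuous F) (hFmono : StrictMono F)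
    (C : ℝ → ℝ) (hCdiff : Differentiable ℝ C) (hCconv : ConvexOn ℝ Set.univ C)
    (γ₁ γ₂ : ℝ) (hγ₁ : 0 < γ₁) (hγ₂ : 0 ≤ γ₂) (hγ : 0 < γ₁ + γ₂)
    (hC' : ∀ g, 0 ≤ deriv C g ∧ deriv C g < γ₁)
    (L : ℝ → ℝ)
    (hL : ∀ g, L g = C g + γ₁ * ∫ x, max (x - g) 0 ∂μ
                          + γ₂ * ∫ x, max (g - x) 0 ∂μ)
    (gstar : ℝ) (hmin : IsMinOn L Set.univ gstar)
    (hsupp : gstar ∈ interior {x | 0 < F x ∧ F x < 1}) :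
    F gstar = (γ₁ - deriv C gstar) / (γ₁ + γ₂) := by
  set g := gstar with hg
  -- basic measure facts
  have hIicIoi : ∀ a : ℝ, (μ (Iic a)).toReal + (μ (Ioi a)).toReal = 1 := by
    intro a
    rw [← ENNReal.toReal_add (measure_ne_top μ _) (measure_ne_top μ _), ← Set.compl_Iic,
      measure_add_measure_compl measurableSet_Iic]
    simp
  have hIoi : ∀ a : ℝ, (μ (Ioi a)).toReal = 1 - F a := by
    intro a; have := hIicIoi a; rw [hF a]; linarith
  have hIio_le : ∀ a : ℝ, (μ (Iio a)).toReal ≤ F a := by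
    intro a; rw [hF a]
    exact ENNReal.toReal_mono (measure_ne_top μ _) (measure_mono Iio_subset_Iic_self)
  have hIci_ge : ∀ a : ℝ, 1 - F a ≤ (μ (Ici a)).toReal := by
    intro a
    rw [← hIoi a]
    exact ENNReal.toReal_mono (measure_ne_top μ _) (measure_mono Ioi_subset_Ici_self)
  -- integral difference bounds
  have hsub1 : ∀ a b : ℝ, (∫ x, max (x - b) 0 ∂μ) - (∫ x, max (x - a) 0 ∂μ)
      = ∫ x, (max (x - b) 0 - max (x - a) 0) ∂μ := by
    intro a b; rw [integral_sub (nv_int_pos μ hmean b) (nv_int_pos μ hmean a)]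
  have hsub2 : ∀ a b : ℝ, (∫ x, max (b - x) 0 ∂μ) - (∫ x, max (a - x) 0 ∂μ)
      = ∫ x, (max (b - x) 0 - max (a - x) 0) ∂μ := by
    intro a b; rw [integral_sub (nv_int_neg μ hmean b) (nv_int_neg μ hmean a)]
  -- LemA : ψ(b) - ψ(a) ≤ (b-a) * -(μ (Ici b))  for a ≤ b
  have lemA : ∀ a b : ℝ, a ≤ b →
      (∫ x, max (x - b) 0 ∂μ) - (∫ x, max (x - a) 0 ∂μ) ≤ (μ (Ici b)).toReal * (a - b) := by
    intro a b hab
    rw [hsub1 a b]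
    refine nv_aux μ ((nv_int_pos μ hmean b).sub (nv_int_pos μ hmean a)) measurableSet_Ici (a - b) ?_
    intro x
    simp only [Pi.sub_apply]
    by_cases hx : x ∈ Ici b
    · rw [indicator_of_mem hx]
      simp only [mem_Ici] at hx
      have h1 : max (x - b) 0 = x - b := max_eq_left (by linarith)
      have h2 : max (x - a) 0 = x - a := max_eq_left (by linarith)
      rw [h1, h2]; linarith
    · rw [indicator_of_notMem hx]
      have : max (x - b) 0 ≤ max (x - a) 0 := max_le_max (by linarith) le_rfl
      linarith
  -- LemB : ψ(a) - ψ(b) ≤ (μ (Ioi a)) * (b-a)  for a ≤ b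
  have lemB : ∀ a b : ℝ, a ≤ b →
      (∫ x, max (x - a) 0 ∂μ) - (∫ x, max (x - b) 0 ∂μ) ≤ (μ (Ioi a)).toReal * (b - a) := by
    intro a b hab
    rw [hsub1 b a]
    refine nv_aux μ ((nv_int_pos μ hmean a).sub (nv_int_pos μ hmean b)) measurableSet_Ioi (b - a) ?_
    intro x
    simp only [Pi.sub_apply]
    by_cases hx : x ∈ Ioi a
    · rw [indicator_of_mem hx]
      simp only [mem_Ioi] at hx
      have h1 : max (x - a) 0 = x - a := max_eq_left (by linarith)
      have h2 : x - b ≤ max (x - b) 0 := le_max_left _ _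
      have h3 : (0:ℝ) ≤ max (x - b) 0 := le_max_right _ _
      linarith
    · rw [indicator_of_notMem hx]
      simp only [mem_Ioi, not_lt] at hx
      have h1 : max (x - a) 0 = 0 := max_eq_right (by linarith)
      have h3 : (0:ℝ) ≤ max (x - b) 0 := le_max_right _ _
      linarith
  -- LemC : φ(b) - φ(a) ≤ (μ (Iio b)) * (b-a) for a ≤ b
  have lemC : ∀ a b : ℝ, a ≤ b →
      (∫ x, max (b - x) 0 ∂μ) - (∫ x, max (a - x) 0 ∂μ) ≤ (μ (Iio b)).toReal * (b - a) := by
    intro a b hab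
    rw [hsub2 a b]
    refine nv_aux μ ((nv_int_neg μ hmean b).sub (nv_int_neg μ hmean a)) measurableSet_Iio (b - a) ?_
    intro x
    simp only [Pi.sub_apply]
    by_cases hx : x ∈ Iio b
    · rw [indicator_of_mem hx]
      have h1 : max (b - x) 0 ≤ b - x := by
        simp only [mem_Iio] at hx
        have : max (b - x) 0 = b - x := max_eq_left (by linarith)
        linarith
      have h2 : a - x ≤ max (a - x) 0 := le_max_left _ _
      linarith
    · rw [indicator_of_notMem hx]
      simp only [mem_Iio, not_lt] at hx
      have h1 : max (b - x) 0 = 0 := max_eq_right (by linarith)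
      have h3 : (0:ℝ) ≤ max (a - x) 0 := le_max_right _ _
      linarith
  -- LemD : φ(a) - φ(b) ≤ (μ (Iic a)) * (a-b) for a ≤ b
  have lemD : ∀ a b : ℝ, a ≤ b →
      (∫ x, max (a - x) 0 ∂μ) - (∫ x, max (b - x) 0 ∂μ) ≤ (μ (Iic a)).toReal * (a - b) := by
    intro a b hab
    rw [hsub2 b a]
    refine nv_aux μ ((nv_int_neg μ hmean a).sub (nv_int_neg μ hmean b)) measurableSet_Iic (a - b) ?_
    intro x
    simp only [Pi.sub_apply]
    by_cases hx : x ∈ Iic a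
    · rw [indicator_of_mem hx]
      simp only [mem_Iic] at hx
      have h1 : max (a - x) 0 = a - x := max_eq_left (by linarith)
      have h2 : max (b - x) 0 = b - x := max_eq_left (by linarith)
      rw [h1, h2]; linarith
    · rw [indicator_of_notMem hx]
      simp only [mem_Iic, not_le] at hx
      have h1 : max (a - x) 0 = 0 := max_eq_right (by linarith)
      have h2 : (0:ℝ) ≤ max (b - x) 0 := le_max_right _ _
      linarith
  -- key one-sided inequalities
  have key1 : ∀ h : ℝ, 0 < h →
      0 ≤ C (g + h) - C g - γ₁ * h * (1 - F (g + h)) + γ₂ * h * F (g + h) := by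
    intro h hh
    have hmin' := hmin (mem_univ (g + h))
    simp only [Set.mem_setOf_eq] at hmin'
    rw [hL g, hL (g + h)] at hmin'
    have hA := lemA g (g + h) (by linarith)
    have hC := lemC g (g + h) (by linarith)
    have hAci : (μ (Ici (g + h))).toReal * (g - (g + h)) ≤ (1 - F (g + h)) * (-h) := by
      have := hIci_ge (g + h)
      nlinarith [this]
    have hCio : (μ (Iio (g + h))).toReal * (g + h - g) ≤ F (g + h) * h := by
      have := hIio_le (g + h)
      nlinarith [this]
    nlinarith [hA, hC, hAci, hCio, hmin', hγ₁, hγ₂]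
  have key2 : ∀ h : ℝ, 0 < h →
      0 ≤ C (g - h) - C g + γ₁ * h * (1 - F (g - h)) - γ₂ * h * F (g - h) := by
    intro h hh
    have hmin' := hmin (mem_univ (g - h))
    simp only [Set.mem_setOf_eq] at hmin'
    rw [hL g, hL (g - h)] at hmin'
    have hB := lemB (g - h) g (by linarith)
    have hD := lemD (g - h) g (by linarith)
    have hBoi : (μ (Ioi (g - h))).toReal * (g - (g - h)) ≤ (1 - F (g - h)) * h := by
      rw [hIoi (g - h)]; nlinarith
    have hDic : (μ (Iic (g - h))).toReal * (g - h - g) ≤ F (g - h) * (-h) := by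
      rw [hF (g - h)] at *
      nlinarith [hF (g - h)]
    nlinarith [hB, hD, hBoi, hDic, hmin', hγ₁, hγ₂]
  -- tendsto machinery
  have hmap_r : Tendsto (fun h : ℝ => g + h) (nhdsWithin 0 (Ioi 0)) (nhdsWithin g {g}ᶜ) := by
    apply tendsto_nhdsWithin_of_tendsto_nhds_of_eventually_within
    · exact ((continuous_const.add continuous_id).tendsto' 0 g (by simp [hg])).mono_left
        nhdsWithin_le_nhds
    · filter_upwards [self_mem_nhdsWithin] with h hh
      simp only [mem_Ioi] at hh
      simp only [mem_compl_iff, mem_singleton_iff]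
      intro hcon
      have h0 : g + h = g := hcon
      linarith
  have hmap_l : Tendsto (fun h : ℝ => g - h) (nhdsWithin 0 (Ioi 0)) (nhdsWithin g {g}ᶜ) := by
    apply tendsto_nhdsWithin_of_tendsto_nhds_of_eventually_within
    · exact ((continuous_const.sub continuous_id).tendsto' 0 g (by simp [hg])).mono_left
        nhdsWithin_le_nhds
    · filter_upwards [self_mem_nhdsWithin] with h hh
      simp only [mem_Ioi] at hh
      simp only [mem_compl_iff, mem_singleton_iff]
      intro hcon
      have h0 : g - h = g := hcon
      linarith
  have hslope : Tendsto (slope C g) (nhdsWithin g {g}ᶜ) (nhds (deriv C g)) :=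
    hasDerivAt_iff_tendsto_slope.mp (hCdiff g).hasDerivAt
  have tC_r : Tendsto (fun h : ℝ => (C (g + h) - C g) / h) (nhdsWithin 0 (Ioi 0))
      (nhds (deriv C g)) := by
    refine Tendsto.congr' ?_ (hslope.comp hmap_r)
    filter_upwards [self_mem_nhdsWithin] with h hh
    simp only [Function.comp_apply, slope_def_field, add_sub_cancel_left]
  have tC_l : Tendsto (fun h : ℝ => (C (g - h) - C g) / h) (nhdsWithin 0 (Ioi 0))
      (nhds (-(deriv C g))) := by
    refine Tendsto.congr' ?_ (hslope.comp hmap_l).neg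
    filter_upwards [self_mem_nhdsWithin] with h hh
    simp only [Pi.neg_apply, Function.comp_apply, slope_def_field]
    have he : g - h - g = -h := by ring
    rw [he, div_neg, neg_neg]
  have tF_r : Tendsto (fun h : ℝ => F (g + h)) (nhdsWithin 0 (Ioi 0)) (nhds (F g)) := by
    have : Tendsto (fun h : ℝ => g + h) (nhdsWithin 0 (Ioi 0)) (nhds g) :=
      ((continuous_const.add continuous_id).tendsto' 0 g (by simp [hg])).mono_left nhdsWithin_le_nhds
    exact (hFcont.tendsto g).comp this
  have tF_l : Tendsto (fun h : ℝ => F (g - h)) (nhdsWithin 0 (Ioi 0)) (nhds (F g)) := by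
    have : Tendsto (fun h : ℝ => g - h) (nhdsWithin 0 (Ioi 0)) (nhds g) :=
      ((continuous_const.sub continuous_id).tendsto' 0 g (by simp [hg])).mono_left nhdsWithin_le_nhds
    exact (hFcont.tendsto g).comp this
  -- right limit : 0 ≤ deriv C g - γ₁ (1 - F g) + γ₂ F g
  have hineq1 : 0 ≤ deriv C g - γ₁ * (1 - F g) + γ₂ * F g := by
    have ht : Tendsto (fun h : ℝ => (C (g + h) - C g) / h - γ₁ * (1 - F (g + h)) + γ₂ * F (g + h))
        (nhdsWithin 0 (Ioi 0)) (nhds (deriv C g - γ₁ * (1 - F g) + γ₂ * F g)) := by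
      exact (tC_r.sub ((tendsto_const_nhds).mul ((tendsto_const_nhds).sub tF_r))).add
        ((tendsto_const_nhds).mul tF_r)
    refine ge_of_tendsto ht ?_
    filter_upwards [self_mem_nhdsWithin] with h hh
    simp only [mem_Ioi] at hh
    have := key1 h hh
    have hne : h ≠ 0 := ne_of_gt hh
    have h1 : 0 ≤ (C (g + h) - C g - γ₁ * h * (1 - F (g + h)) + γ₂ * h * F (g + h)) / h :=
      div_nonneg this (le_of_lt hh)
    calc (0:ℝ) ≤ (C (g + h) - C g - γ₁ * h * (1 - F (g + h)) + γ₂ * h * F (g + h)) / h := h1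
      _ = (C (g + h) - C g) / h - γ₁ * (1 - F (g + h)) + γ₂ * F (g + h) := by
          field_simp
  -- left limit : deriv C g - γ₁ (1 - F g) + γ₂ F g ≤ 0
  have hineq2 : deriv C g - γ₁ * (1 - F g) + γ₂ * F g ≤ 0 := by
    have ht : Tendsto (fun h : ℝ => (C (g - h) - C g) / h + γ₁ * (1 - F (g - h)) - γ₂ * F (g - h))
        (nhdsWithin 0 (Ioi 0))
        (nhds (-(deriv C g) + γ₁ * (1 - F g) - γ₂ * F g)) := by
      exact (tC_l.add ((tendsto_const_nhds).mul ((tendsto_const_nhds).sub tF_l))).sub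
        ((tendsto_const_nhds).mul tF_l)
    have h0 : (0:ℝ) ≤ -(deriv C g) + γ₁ * (1 - F g) - γ₂ * F g := by
      refine ge_of_tendsto ht ?_
      filter_upwards [self_mem_nhdsWithin] with h hh
      simp only [mem_Ioi] at hh
      have := key2 h hh
      have hne : h ≠ 0 := ne_of_gt hh
      have h1 : 0 ≤ (C (g - h) - C g + γ₁ * h * (1 - F (g - h)) - γ₂ * h * F (g - h)) / h :=
        div_nonneg this (le_of_lt hh)
      calc (0:ℝ) ≤ (C (g - h) - C g + γ₁ * h * (1 - F (g - h)) - γ₂ * h * F (g - h)) / h := h1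
        _ = (C (g - h) - C g) / h + γ₁ * (1 - F (g - h)) - γ₂ * F (g - h) := by
            field_simp
    linarith
  have hzero : deriv C g - γ₁ * (1 - F g) + γ₂ * F g = 0 := le_antisymm hineq2 hineq1
  field_simp
  linarith
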